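/- arXiv:0911.2485 — 3 statements merged into one kernel-verified Lean document; each statement's English description precedes it below -/
import Mathlib

section
/- Let N ≥ 2. If k ≥ N−1 and k ≥ m ≥ 0, then the two-variable Schur polynomial π_{k,m}(x,y) lies in the ideal of ℚ[x,y] generated by h_{N−1}(x,y) and h_N(x,y). (This is the dot conversion relation for double facets of sl(N) foams: a double facet labeled by π_{k,m} with k ≥ N−1 is zero.) -/
open MvPolynomial

/-- The complete homogeneous symmetric polynomial of degree `j` in two variables. -/
noncomputable def hpoly (j : ℕ) : MvPolynomial (Fin 2) ℚ :=
  ∑ p ∈ Finset.HasAntidiagonal.antidiagonal j, X 0 ^ p.1 * X 1 ^ p.2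

/-- The two-variable Schur polynomial `π_{k,m}(x,y) = ∑_{i=m}^k x^i y^{k+m-i}`. -/
noncomputable def pitwo (k m : ℕ) : MvPolynomial (Fin 2) ℚ :=
  ∑ i ∈ Finset.Icc m k, X 0 ^ i * X 1 ^ (k + m - i)

lemma hpoly_range (j : ℕ) :
    hpoly j = ∑ i ∈ Finset.range (j + 1), X 0 ^ i * X 1 ^ (j - i) := by
  rw [hpoly, Finset.Nat.sum_antidiagonal_eq_sum_range_succ_mk]

lemma telescope (j : ℕ) :
    (X 0 - X 1) * hpoly j = X 0 ^ (j + 1) - X 1 ^ (j + 1) := by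
  induction j with
  | zero => simp [hpoly_range]
  | succ n ih =>
    have hsplit : hpoly (n + 1) = X 1 * hpoly n + X 0 ^ (n + 1) := by
      rw [hpoly_range, hpoly_range, Finset.sum_range_succ, Finset.mul_sum]
      congr 1
      · apply Finset.sum_congr rfl
        intro i hi
        have hi' : i ≤ n := by simpa [Nat.lt_succ_iff] using hi
        have : n + 1 - i = (n - i) + 1 := by omega
        rw [this]
        ring
      · simp
    rw [hsplit]
    have : (X 0 - X 1) * (X 1 * hpoly n + X 0 ^ (n + 1)) =
        X 1 * ((X 0 - X 1) * hpoly n) + (X 0 - X 1) * X 0 ^ (n + 1) := by ring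
    rw [this, ih]
    ring

lemma xsuby_ne : (X 0 - X 1 : MvPolynomial (Fin 2) ℚ) ≠ 0 := by
  intro h
  have := congrArg (eval ![1, 0]) h
  simp at this

lemma hpoly_rec (j : ℕ) :
    hpoly (j + 2) = (X 0 + X 1) * hpoly (j + 1) - X 0 * X 1 * hpoly j := by
  apply mul_left_cancel₀ xsuby_ne
  rw [telescope]
  have h1 := telescope (j + 1)
  have h0 := telescope j
  have : (X 0 - X 1) * ((X 0 + X 1) * hpoly (j + 1) - X 0 * X 1 * hpoly j) =
      (X 0 + X 1) * ((X 0 - X 1) * hpoly (j + 1)) -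
        X 0 * X 1 * ((X 0 - X 1) * hpoly j) := by ring
  rw [this, h1, h0]
  ring

lemma hpoly_mem (N : ℕ) (hN : 2 ≤ N) (j : ℕ) (hj : N - 1 ≤ j) :
    hpoly j ∈ Ideal.span {hpoly (N - 1), hpoly N} := by
  obtain ⟨d, rfl⟩ := Nat.exists_eq_add_of_le hj
  induction d using Nat.strong_induction_on with
  | _ d ih =>
    match d with
    | 0 =>
      exact Ideal.subset_span (by simp)
    | 1 =>
      have : N - 1 + 1 = N := by omega
      rw [this]
      exact Ideal.subset_span (by simp)
    | (e + 2) =>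
      have h1 : N - 1 + (e + 2) = (N - 1 + e) + 2 := by omega
      rw [h1, hpoly_rec]
      have m1 := ih (e + 1) (by omega) (by omega)
      have m0 := ih e (by omega) (by omega)
      have h2 : N - 1 + (e + 1) = N - 1 + e + 1 := by omega
      rw [h2] at m1
      exact sub_mem (Ideal.mul_mem_left _ _ m1) (Ideal.mul_mem_left _ _ m0)

lemma key (N : ℕ) (hN : 2 ≤ N) (m j : ℕ) (h : N - 1 ≤ m + j) :
    (X 0 * X 1) ^ m * hpoly j ∈ Ideal.span {hpoly (N - 1), hpoly N} := by
  induction m generalizing j with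
  | zero =>
    simpa using hpoly_mem N hN j (by omega)
  | succ n ih =>
    have hrec : X 0 * X 1 * hpoly j = (X 0 + X 1) * hpoly (j + 1) - hpoly (j + 2) :=
      by rw [hpoly_rec]; ring
    have : (X 0 * X 1) ^ (n + 1) * hpoly j =
        (X 0 + X 1) * ((X 0 * X 1) ^ n * hpoly (j + 1)) -
          (X 0 * X 1) ^ n * hpoly (j + 2) := by
      rw [pow_succ]
      calc (X 0 * X 1) ^ n * (X 0 * X 1) * hpoly j
          = (X 0 * X 1) ^ n * (X 0 * X 1 * hpoly j) := by ring
        _ = _ := by rw [hrec]; ring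
    rw [this]
    exact sub_mem (Ideal.mul_mem_left _ _ (ih (j + 1) (by omega)))
      (ih (j + 2) (by omega))

lemma pitwo_eq (k m : ℕ) (hkm : m ≤ k) :
    pitwo k m = (X 0 * X 1) ^ m * hpoly (k - m) := by
  rw [pitwo, hpoly_range, Finset.mul_sum]
  apply Finset.sum_nbij' (fun i => i - m) (fun i => i + m)
  · intro i hi
    simp only [Finset.mem_Icc] at hi
    simp only [Finset.mem_range]
    omega
  · intro i hi
    simp only [Finset.mem_range] at hi
    simp only [Finset.mem_Icc]
    omega
  · intro i hi
    simp only [Finset.mem_Icc] at hi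
    omega
  · intro i hi
    simp only [Finset.mem_range] at hi
    omega
  · intro i hi
    simp only [Finset.mem_Icc] at hi
    have h1 : i = m + (i - m) := by omega
    have h2 : k + m - i = m + (k - m - (i - m)) := by omega
    rw [mul_pow]
    conv_lhs => rw [h2, h1]
    rw [pow_add, pow_add]
    simp only [Nat.add_sub_cancel_left]
    ring

/-- Dot conversion for double facets: for `N ≥ 2` and `k ≥ N−1`, `k ≥ m ≥ 0`,
the Schur polynomial `π_{k,m}` lies in the ideal `(h_{N−1}, h_N)`. -/
theorem pitwo_mem_ideal (N : ℕ) (hN : 2 ≤ N) (k m : ℕ) (hk : N - 1 ≤ k) (hkm : m ≤ k) :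
    pitwo k m ∈ Ideal.span {hpoly (N - 1), hpoly N} := by
  rw [pitwo_eq k m hkm]
  exact key N hN m (k - m) (by omega)
end

section
/- On ℚ[x₁,x₂,x₃], define Demazure operators ∂₁(f) = (f − s₁f)/(x₁−x₂) and ∂₂(f) = (f − s₂f)/(x₂−x₃), where s₁ swaps x₁,x₂ and s₂ swaps x₂,x₃. Then the braid relation holds: ∂₁∘∂₂∘∂₁ = ∂₂∘∂₁∘∂₂. -/
open MvPolynomial

/-- The automorphism of `ℚ[x₁,x₂,x₃]` swapping `x₁` and `x₂`. -/
noncomputable def swap12 : MvPolynomial (Fin 3) ℚ →ₐ[ℚ] MvPolynomial (Fin 3) ℚ :=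
  rename (Equiv.swap 0 1)

/-- The automorphism of `ℚ[x₁,x₂,x₃]` swapping `x₂` and `x₃`. -/
noncomputable def swap23 : MvPolynomial (Fin 3) ℚ →ₐ[ℚ] MvPolynomial (Fin 3) ℚ :=
  rename (Equiv.swap 1 2)

lemma s12X0 : swap12 (X 0 : MvPolynomial (Fin 3) ℚ) = X 1 := by
  simp [swap12, Equiv.swap_apply_def]
lemma s12X1 : swap12 (X 1 : MvPolynomial (Fin 3) ℚ) = X 0 := by
  simp [swap12, Equiv.swap_apply_def]
lemma s12X2 : swap12 (X 2 : MvPolynomial (Fin 3) ℚ) = X 2 := by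
  simp [swap12, Equiv.swap_apply_def]
lemma s23X0 : swap23 (X 0 : MvPolynomial (Fin 3) ℚ) = X 0 := by
  simp [swap23, Equiv.swap_apply_def]
lemma s23X1 : swap23 (X 1 : MvPolynomial (Fin 3) ℚ) = X 2 := by
  simp [swap23, Equiv.swap_apply_def]
lemma s23X2 : swap23 (X 2 : MvPolynomial (Fin 3) ℚ) = X 1 := by
  simp [swap23, Equiv.swap_apply_def]

lemma invol12 (p : MvPolynomial (Fin 3) ℚ) : swap12 (swap12 p) = p := by
  simp only [swap12, rename_rename]
  rw [show ⇑(Equiv.swap (0:Fin 3) 1) ∘ ⇑(Equiv.swap 0 1) = id from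
    funext fun x => Equiv.swap_apply_self _ _ x]
  exact rename_id_apply p

lemma invol23 (p : MvPolynomial (Fin 3) ℚ) : swap23 (swap23 p) = p := by
  simp only [swap23, rename_rename]
  rw [show ⇑(Equiv.swap (1:Fin 3) 2) ∘ ⇑(Equiv.swap 1 2) = id from
    funext fun x => Equiv.swap_apply_self _ _ x]
  exact rename_id_apply p

lemma braid_rename (p : MvPolynomial (Fin 3) ℚ) :
    swap12 (swap23 (swap12 p)) = swap23 (swap12 (swap23 p)) := by
  simp only [swap12, swap23, rename_rename]
  rw [show (⇑(Equiv.swap (0:Fin 3) 1) ∘ ⇑(Equiv.swap 1 2) ∘ ⇑(Equiv.swap 0 1))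
      = (⇑(Equiv.swap (1:Fin 3) 2) ∘ ⇑(Equiv.swap 0 1) ∘ ⇑(Equiv.swap 1 2)) from
    funext fun x => by fin_cases x <;> decide]

lemma Xsub_ne_zero (i j : Fin 3) (h : i ≠ j) :
    (X i - X j : MvPolynomial (Fin 3) ℚ) ≠ 0 := by
  refine sub_ne_zero.2 fun hXe => h ?_
  exact MvPolynomial.X_injective hXe

/-- Braid relation `∂₁∂₂∂₁ = ∂₂∂₁∂₂` for the Demazure operators
`∂₁(f) = (f − s₁f)/(x₁−x₂)` and `∂₂(f) = (f − s₂f)/(x₂−x₃)`, the divided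
differences being specified implicitly by their defining equations. -/
theorem demazure_braid (f a b c d e g : MvPolynomial (Fin 3) ℚ)
    (ha : (X 0 - X 1) * a = f - swap12 f)
    (hb : (X 1 - X 2) * b = a - swap23 a)
    (hc : (X 0 - X 1) * c = b - swap12 b)
    (hd : (X 1 - X 2) * d = f - swap23 f)
    (he : (X 0 - X 1) * e = d - swap12 d)
    (hg : (X 1 - X 2) * g = e - swap23 e) :
    c = g := by
  have hu : (X 0 - X 1 : MvPolynomial (Fin 3) ℚ) ≠ 0 := Xsub_ne_zero 0 1 (by decide)
  have hv : (X 1 - X 2 : MvPolynomial (Fin 3) ℚ) ≠ 0 := Xsub_ne_zero 1 2 (by decide)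
  have hw : (X 0 - X 2 : MvPolynomial (Fin 3) ℚ) ≠ 0 := Xsub_ne_zero 0 2 (by decide)
  -- s₁ a = a
  have haa : swap12 a = a := by
    have h := congrArg swap12 ha
    simp only [map_mul, map_sub, s12X0, s12X1, invol12] at h
    refine mul_left_cancel₀ hu ?_
    linear_combination (-1 : MvPolynomial (Fin 3) ℚ) * h - ha
  -- s₂ d = d
  have hdd : swap23 d = d := by
    have h := congrArg swap23 hd
    simp only [map_mul, map_sub, s23X1, s23X2, invol23] at h
    refine mul_left_cancel₀ hv ?_
    linear_combination (-1 : MvPolynomial (Fin 3) ℚ) * h - hd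
  -- transformed equations, c side
  have A2 : (X 0 - X 2) * swap23 a = swap23 f - swap23 (swap12 f) := by
    have h := congrArg swap23 ha
    simpa only [map_mul, map_sub, s23X0, s23X1] using h
  have A3 : (X 1 - X 2) * swap12 (swap23 a)
      = swap12 (swap23 f) - swap12 (swap23 (swap12 f)) := by
    have h := congrArg swap12 A2
    simpa only [map_mul, map_sub, s12X0, s12X2] using h
  have B2 : (X 0 - X 2) * swap12 b = a - swap12 (swap23 a) := by
    have h := congrArg swap12 hb
    simpa only [map_mul, map_sub, s12X1, s12X2, haa] using h
  have key_c : (X 0 - X 1) * (X 1 - X 2) * (X 0 - X 2) * c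
      = f - swap12 f - swap23 f + swap23 (swap12 f) + swap12 (swap23 f)
        - swap12 (swap23 (swap12 f)) := by
    linear_combination ((X 1 - X 2) * (X 0 - X 2)) * hc + (X 0 - X 2) * hb
      - (X 1 - X 2) * B2 + ha - A2 + A3
  -- transformed equations, g side
  have A2' : (X 0 - X 2) * swap12 d = swap12 f - swap12 (swap23 f) := by
    have h := congrArg swap12 hd
    simpa only [map_mul, map_sub, s12X1, s12X2] using h
  have A3' : (X 0 - X 1) * swap23 (swap12 d)
      = swap23 (swap12 f) - swap23 (swap12 (swap23 f)) := by
    have h := congrArg swap23 A2'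
    simpa only [map_mul, map_sub, s23X0, s23X2] using h
  have B2' : (X 0 - X 2) * swap23 e = d - swap23 (swap12 d) := by
    have h := congrArg swap23 he
    simpa only [map_mul, map_sub, s23X0, s23X1, hdd] using h
  have key_g : (X 0 - X 1) * (X 1 - X 2) * (X 0 - X 2) * g
      = f - swap23 f - swap12 f + swap12 (swap23 f) + swap23 (swap12 f)
        - swap23 (swap12 (swap23 f)) := by
    linear_combination ((X 0 - X 1) * (X 0 - X 2)) * hg + (X 0 - X 2) * he
      - (X 0 - X 1) * B2' + hd - A2' + A3'
  refine mul_left_cancel₀ (mul_ne_zero (mul_ne_zero hu hv) hw) ?_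
  rw [key_c, key_g, braid_rename]
  ring
end

section
/- Let R = ℚ[x,y], R^s the symmetric subring, and B = R ⊗_{R^s} R. Then there is an isomorphism of (R,R)-bimodules B ⊗_R B ≅ B ⊕ B. (Categorified quadratic Hecke relation: b_i² = (q+q⁻¹)b_i; in the paper this corresponds to the one-color digon relations.) -/
set_option synthInstance.maxHeartbeats 1000000
set_option maxHeartbeats 1000000
open MvPolynomial TensorProduct

noncomputable abbrev SoergelR : Type := MvPolynomial (Fin 2) ℚ

noncomputable abbrev SoergelRs : Subalgebra ℚ SoergelR := symmetricSubalgebra (Fin 2) ℚ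

/-- The Soergel bimodule `B = R ⊗_{R^s} R`. -/
noncomputable abbrev SoergelB : Type := SoergelR ⊗[SoergelRs] SoergelR

/-! ### Generic tensor-product isomorphisms -/

section Generic
variable {S R : Type*} [CommRing S] [CommRing R] [Algebra S R]

/-- Upgrade an `S`-linear equivalence between `R`-modules to an `R`-linear one. -/
def upgrade {M N : Type*} [AddCommMonoid M] [AddCommMonoid N]
    [Module S M] [Module S N] [Module R M] [Module R N]
    (φ : M ≃ₗ[S] N) (h : ∀ (r : R) (x : M), φ (r • x) = r • φ x) :
    M ≃ₗ[R] N where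
  toFun := φ
  invFun := φ.symm
  map_add' := φ.map_add
  map_smul' := h
  left_inv := φ.left_inv
  right_inv := φ.right_inv

set_option linter.unusedSectionVars false in
@[simp] lemma upgrade_apply {M N : Type*} [AddCommMonoid M] [AddCommMonoid N]
    [Module S M] [Module S N] [Module R M] [Module R N]
    (φ : M ≃ₗ[S] N) (h : ∀ (r : R) (x : M), φ (r • x) = r • φ x) (x : M) :
    upgrade φ h x = φ x := rfl

variable (ρ : R ≃ₗ[S] S × S)

noncomputable def prR : R ⊗[S] (S × S) ≃ₗ[R] (R ⊗[S] S) × (R ⊗[S] S) :=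
  upgrade (TensorProduct.prodRight S S R S S) (by
    intro r x
    induction x using TensorProduct.induction_on with
    | zero => rw [smul_zero, map_zero, smul_zero]
    | tmul m p =>
        obtain ⟨p1, p2⟩ := p
        rw [smul_tmul', prodRight_tmul, prodRight_tmul, Prod.smul_mk, smul_tmul', smul_tmul']
    | add x y hx hy => rw [smul_add, map_add, hx, hy, map_add, smul_add])

noncomputable def plR : (R × R) ⊗[S] R ≃ₗ[R] (R ⊗[S] R) × (R ⊗[S] R) :=
  upgrade (TensorProduct.prodLeft S S R R R) (by
    intro r x
    induction x using TensorProduct.induction_on with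
    | zero => rw [smul_zero, map_zero, smul_zero]
    | tmul m p =>
        obtain ⟨m1, m2⟩ := m
        rw [smul_tmul', Prod.smul_mk, prodLeft_tmul, prodLeft_tmul, Prod.smul_mk,
          smul_tmul', smul_tmul']
    | add x y hx hy => rw [smul_add, map_add, hx, hy, map_add, smul_add])

noncomputable def step1 : (R ⊗[S] R) ≃ₗ[R] R × R :=
  (AlgebraTensorModule.congr (LinearEquiv.refl R R) ρ) ≪≫ₗ prR ≪≫ₗ
  (LinearEquiv.prodCongr (AlgebraTensorModule.rid S R R) (AlgebraTensorModule.rid S R R))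

lemma step1_tmul (a b : R) :
    step1 ρ (a ⊗ₜ[S] b) = ((ρ b).1 • a, (ρ b).2 • a) := by
  simp only [step1, LinearEquiv.trans_apply, AlgebraTensorModule.congr_tmul,
    LinearEquiv.refl_apply, prR]
  rw [upgrade_apply]
  obtain ⟨b1, b2⟩ := ρ b
  rw [prodRight_tmul]
  rfl

noncomputable def step2 : ((R ⊗[S] R) ⊗[R] (R ⊗[S] R)) ≃ₗ[R] (R ⊗[S] R) × (R ⊗[S] R) :=
  (AlgebraTensorModule.cancelBaseChange S R R (R ⊗[S] R) R) ≪≫ₗ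
  (AlgebraTensorModule.congr (step1 ρ) (LinearEquiv.refl S R)) ≪≫ₗ plR

lemma step2_apply (u : R ⊗[S] R) (b' c : R) :
    step2 ρ (u ⊗ₜ[R] (b' ⊗ₜ[S] c))
      = ((step1 ρ (b' • u)).1 ⊗ₜ[S] c, (step1 ρ (b' • u)).2 ⊗ₜ[S] c) := by
  simp only [step2, LinearEquiv.trans_apply, AlgebraTensorModule.cancelBaseChange_tmul,
    AlgebraTensorModule.congr_tmul, LinearEquiv.refl_apply, plR]
  rw [upgrade_apply]
  obtain ⟨w1, w2⟩ := step1 ρ (b' • u)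
  rw [prodLeft_tmul]

lemma step2_mul (z : (R ⊗[S] R) ⊗[R] (R ⊗[S] R)) (r : R) :
    step2 ρ (z * ((1 : R ⊗[S] R) ⊗ₜ[R] ((1 : R) ⊗ₜ[S] r)))
      = step2 ρ z * ((1 : R) ⊗ₜ[S] r, (1 : R) ⊗ₜ[S] r) := by
  induction z using TensorProduct.induction_on with
  | zero => rw [zero_mul, (step2 ρ).map_zero, zero_mul]
  | add x y hx hy => rw [add_mul, (step2 ρ).map_add, hx, hy, (step2 ρ).map_add, add_mul]
  | tmul u v =>
      rw [Algebra.TensorProduct.tmul_mul_tmul, mul_one]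
      induction v using TensorProduct.induction_on with
      | zero => rw [zero_mul, tmul_zero, (step2 ρ).map_zero, zero_mul]
      | add x y hx hy =>
          rw [add_mul, tmul_add, (step2 ρ).map_add, hx, hy, tmul_add, (step2 ρ).map_add, add_mul]
      | tmul b' c =>
          rw [Algebra.TensorProduct.tmul_mul_tmul, mul_one, step2_apply, step2_apply,
            Prod.mk_mul_mk, Algebra.TensorProduct.tmul_mul_tmul, mul_one,
            Algebra.TensorProduct.tmul_mul_tmul, mul_one]

end Generic

/-! ### `ℚ[x,y]` is free of rank 2 over its symmetric subalgebra -/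

noncomputable def sw : SoergelR →ₐ[ℚ] SoergelR := rename (Equiv.swap 0 1)

lemma sw_sw (f : SoergelR) : sw (sw f) = f := by
  simp only [sw, rename_rename]
  have : (Equiv.swap (0:Fin 2) 1) ∘ (Equiv.swap 0 1) = id := by
    funext x; simp [Equiv.swap_apply_self]
  rw [this, rename_id, AlgHom.id_apply]

lemma mem_Rs_iff {f : SoergelR} : f ∈ SoergelRs ↔ sw f = f := by
  rw [mem_symmetricSubalgebra]
  constructor
  · intro h; exact h _
  · intro h e
    have he : e = Equiv.refl _ ∨ e = Equiv.swap 0 1 := by revert e; decide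
    rcases he with rfl | rfl
    · simp [rename_id]
    · exact h

lemma sw_X0 : sw (X 0 : SoergelR) = X 1 := by
  simp [sw, rename_X]

lemma sw_X1 : sw (X 1 : SoergelR) = X 0 := by
  simp [sw, rename_X]

lemma sw_d : sw (X 0 - X 1 : SoergelR) = -(X 0 - X 1) := by
  rw [map_sub, sw_X0, sw_X1]; ring

lemma sw_dvd (f : SoergelR) : (X 0 - X 1 : SoergelR) ∣ (f - sw f) := by
  induction f using MvPolynomial.induction_on with
  | C a => simp [sw]
  | add p q hp hq =>
      have : p + q - sw (p + q) = (p - sw p) + (q - sw q) := by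
        rw [map_add]; ring
      rw [this]; exact dvd_add hp hq
  | mul_X p n hp =>
      have hsw : sw (p * X n) = sw p * X ((Equiv.swap 0 1) n) := by
        simp [sw, rename_X]
      have key : p * X n - sw (p * X n)
          = (p - sw p) * X n + sw p * (X n - X ((Equiv.swap 0 1) n)) := by
        rw [hsw]; ring
      rw [key]
      refine dvd_add (hp.mul_right _) (Dvd.dvd.mul_left ?_ _)
      fin_cases n
      · simp
      · exact dvd_sub_comm.mp dvd_rfl

lemma d_ne : (X 0 - X 1 : SoergelR) ≠ 0 :=
  sub_ne_zero.mpr (fun h => by exact absurd (X_injective h) (by decide))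

lemma dcancel {a b : SoergelR} (h : (X 0 - X 1) * a = (X 0 - X 1) * b) : a = b :=
  mul_left_cancel₀ d_ne h

noncomputable def Hq (f : SoergelR) : SoergelR := (sw_dvd f).choose

lemma Hq_spec (f : SoergelR) : f - sw f = (X 0 - X 1) * Hq f := (sw_dvd f).choose_spec

lemma sw_Hq (f : SoergelR) : sw (Hq f) = Hq f := by
  apply dcancel
  have h := congrArg sw (Hq_spec f)
  rw [map_sub, map_mul, sw_sw, sw_d] at h
  have h2 := Hq_spec f
  linear_combination h + h2

lemma Hq_mem (f : SoergelR) : Hq f ∈ SoergelRs := mem_Rs_iff.mpr (sw_Hq f)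

noncomputable def Gq (f : SoergelR) : SoergelR := f - Hq f * X 0

lemma sw_Gq (f : SoergelR) : sw (Gq f) = Gq f := by
  have h := Hq_spec f
  simp only [Gq, map_sub, map_mul, sw_Hq, sw_X0]
  linear_combination -h

lemma Gq_mem (f : SoergelR) : Gq f ∈ SoergelRs := mem_Rs_iff.mpr (sw_Gq f)

lemma Gq_add_Hq (f : SoergelR) : (Gq f) + Hq f * X 0 = f := by simp [Gq]

lemma coe_smul (s : SoergelRs) (f : SoergelR) : s • f = (s : SoergelR) * f := rfl

lemma sw_coe (s : SoergelRs) : sw (s : SoergelR) = (s : SoergelR) := mem_Rs_iff.mp s.2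

lemma Hq_add (f g : SoergelR) : Hq (f + g) = Hq f + Hq g := by
  apply dcancel
  rw [mul_add, ← Hq_spec, ← Hq_spec, ← Hq_spec, map_add]; ring

lemma Hq_smul (s : SoergelRs) (f : SoergelR) : Hq (s • f) = (s : SoergelR) * Hq f := by
  apply dcancel
  rw [← Hq_spec, coe_smul, map_mul, sw_coe]
  have := Hq_spec f
  linear_combination (s : SoergelR) * this

lemma Gq_add (f g : SoergelR) : Gq (f + g) = Gq f + Gq g := by
  simp only [Gq, Hq_add]; ring

lemma Gq_smul (s : SoergelRs) (f : SoergelR) : Gq (s • f) = (s : SoergelR) * Gq f := by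
  simp only [Gq, Hq_smul]; rw [coe_smul]; ring

lemma uniq {s t : SoergelR} (hs : sw s = s) (ht : sw t = t)
    (h : s + t * X 0 = 0) : s = 0 ∧ t = 0 := by
  have h2 := congrArg sw h
  rw [map_add, map_mul, hs, ht, map_zero] at h2
  rw [sw_X0] at h2
  have ht0 : t = 0 := by
    have : (X 0 - X 1) * t = 0 := by linear_combination h - h2
    rcases mul_eq_zero.mp this with h' | h'
    · exact absurd h' d_ne
    · exact h'
  refine ⟨?_, ht0⟩
  rw [ht0] at h; simpa using h

noncomputable def Hs : SoergelR →ₗ[SoergelRs] SoergelRs where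
  toFun f := ⟨Hq f, Hq_mem f⟩
  map_add' f g := Subtype.ext (Hq_add f g)
  map_smul' s f := Subtype.ext (Hq_smul s f)

noncomputable def Gs : SoergelR →ₗ[SoergelRs] SoergelRs where
  toFun f := ⟨Gq f, Gq_mem f⟩
  map_add' f g := Subtype.ext (Gq_add f g)
  map_smul' s f := Subtype.ext (Gq_smul s f)

noncomputable def κ : SoergelRs × SoergelRs →ₗ[SoergelRs] SoergelR where
  toFun p := (p.1 : SoergelR) + (p.2 : SoergelR) * X 0
  map_add' p q := by
    simp only [Prod.fst_add, Prod.snd_add]; push_cast; ring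
  map_smul' s p := by
    simp only [Prod.smul_fst, Prod.smul_snd, smul_eq_mul, RingHom.id_apply]
    push_cast
    rw [coe_smul]
    ring

noncomputable def ρSoergel : SoergelR ≃ₗ[SoergelRs] SoergelRs × SoergelRs :=
  LinearEquiv.ofLinear (LinearMap.prod Gs Hs) κ
    (by
      apply LinearMap.ext; intro p
      have hκ : κ p = (p.1 : SoergelR) + (p.2 : SoergelR) * X 0 := rfl
      have h0 : (Gq (κ p) - (p.1 : SoergelR)) + (Hq (κ p) - (p.2 : SoergelR)) * X 0 = 0 := by
        linear_combination (Gq_add_Hq (κ p)) + hκ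
      obtain ⟨h1, h2⟩ := uniq (by rw [map_sub, sw_Gq, sw_coe])
        (by rw [map_sub, sw_Hq, sw_coe]) h0
      show (Gs (κ p), Hs (κ p)) = p
      refine Prod.ext (Subtype.ext ?_) (Subtype.ext ?_)
      · exact sub_eq_zero.mp h1
      · exact sub_eq_zero.mp h2)
    (by
      apply LinearMap.ext; intro f
      show (Gq f : SoergelR) + (Hq f : SoergelR) * X 0 = f
      exact Gq_add_Hq f)

/-- Categorified quadratic Hecke relation: `B ⊗_R B ≅ B ⊕ B` as `(R,R)`-bimodules.
The left `R`-action is the module structure; the right `R`-action is encoded by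
multiplication with `1 ⊗ (1 ⊗ r)` on `B ⊗_R B` and with `1 ⊗ r` on each summand. -/
theorem soergel_bimodule_square :
    ∃ e : (SoergelB ⊗[SoergelR] SoergelB) ≃ₗ[SoergelR] SoergelB × SoergelB,
      ∀ (z : SoergelB ⊗[SoergelR] SoergelB) (r : SoergelR),
        e (z * ((1 : SoergelB) ⊗ₜ[SoergelR]
            ((1 : SoergelR) ⊗ₜ[SoergelRs] r)))
        = e z * ((1 : SoergelR) ⊗ₜ[SoergelRs] r,
                 (1 : SoergelR) ⊗ₜ[SoergelRs] r) := by
  exact ⟨step2 ρSoergel, step2_mul ρSoergel⟩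
end
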